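/- Let a ∈ (0,1), b > 0 with a + b = 1, and set K(a,b) = ∫₀¹ (1-s)^(-a) s^(-b) ds. If C₂ < 1/K(a,b) and h : [0,∞) → [0,∞) is locally bounded and satisfies h(t) ≤ C₁(1+t) + C₂ ∫₀ᵗ (t-τ)^(-a) τ^(-b) h(τ) dτ for all t ≥ 0, then h(t) ≤ (C₁/(1 - C₂ K(a,b)))(1+t) for all t ≥ 0. -/

import Mathlib

open MeasureTheory Set

lemma measurable_rpow_const' (c : ℝ) : Measurable (fun x : ℝ => x ^ c) := by
  apply measurable_of_continuousOn_compl_singleton (0:ℝ)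
  exact continuousOn_of_forall_continuousAt fun x hx =>
    Real.continuousAt_rpow_const x c (Or.inl hx)

lemma kernMeas (a b t : ℝ) : Measurable (fun τ : ℝ => (t - τ) ^ (-a) * τ ^ (-b)) :=
  (((measurable_rpow_const' (-a)).comp (measurable_const.sub measurable_id))).mul
    (measurable_rpow_const' (-b))

-- integrability of the singular kernel on (0,t)
lemma kernInt (a b : ℝ) (ha : 0 < a) (ha1 : a < 1) (hb : 0 < b) (hb1 : b < 1)
    (t : ℝ) (ht : 0 < t) :
    IntegrableOn (fun τ : ℝ => (t - τ) ^ (-a) * τ ^ (-b)) (Ioo 0 t) := by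
  have hmeas := kernMeas a b t
  have h2t : 0 < t / 2 := by linarith
  -- on (0, t/2]
  have i1 : IntegrableOn (fun τ : ℝ => (t - τ) ^ (-a) * τ ^ (-b)) (Ioc 0 (t/2)) := by
    have hg : IntegrableOn (fun τ : ℝ => (t/2) ^ (-a) * τ ^ (-b)) (Ioc 0 (t/2)) := by
      have := (intervalIntegral.intervalIntegrable_rpow' (a := 0) (b := t/2) (r := -b)
        (by linarith))
      rw [intervalIntegrable_iff_integrableOn_Ioc_of_le (by linarith)] at this
      exact this.const_mul _
    refine Integrable.mono' hg (hmeas.aestronglyMeasurable) ?_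
    filter_upwards [ae_restrict_mem measurableSet_Ioc] with τ hτ
    have h1 : 0 < t - τ := by have := hτ.2; linarith
    have h2 : (t - τ) ^ (-a) ≤ (t/2) ^ (-a) :=
      Real.rpow_le_rpow_of_nonpos h2t (by linarith [hτ.2]) (by linarith)
    rw [Real.norm_eq_abs, abs_of_nonneg
      (mul_nonneg (Real.rpow_nonneg h1.le _) (Real.rpow_nonneg hτ.1.le _))]
    exact mul_le_mul_of_nonneg_right h2 (Real.rpow_nonneg hτ.1.le _)
  -- on (t/2, t)
  have i2 : IntegrableOn (fun τ : ℝ => (t - τ) ^ (-a) * τ ^ (-b)) (Ioo (t/2) t) := by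
    have hg : IntegrableOn (fun τ : ℝ => (t - τ) ^ (-a) * (t/2) ^ (-b)) (Ioo (t/2) t) := by
      have h0 : IntervalIntegrable (fun x : ℝ => x ^ (-a)) volume 0 (t/2) :=
        intervalIntegral.intervalIntegrable_rpow' (by linarith)
      have h1 := (h0.comp_sub_left t).symm
      rw [show t - 0 = t by ring, show t - t/2 = t/2 by ring] at h1
      rw [intervalIntegrable_iff_integrableOn_Ioc_of_le (by linarith)] at h1
      exact ((h1.mono_set Ioo_subset_Ioc_self).mul_const _)
    refine Integrable.mono' hg (hmeas.aestronglyMeasurable) ?_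
    filter_upwards [ae_restrict_mem measurableSet_Ioo] with τ hτ
    have h1 : 0 < t - τ := by have := hτ.2; linarith
    have hτ0 : 0 < τ := lt_trans h2t hτ.1
    have h2 : τ ^ (-b) ≤ (t/2) ^ (-b) :=
      Real.rpow_le_rpow_of_nonpos h2t hτ.1.le (by linarith)
    rw [Real.norm_eq_abs, abs_of_nonneg
      (mul_nonneg (Real.rpow_nonneg h1.le _) (Real.rpow_nonneg hτ0.le _))]
    exact mul_le_mul_of_nonneg_left h2 (Real.rpow_nonneg h1.le _)
  refine (i1.union i2).mono_set ?_
  intro τ hτ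
  rcases le_or_gt τ (t/2) with hc | hc
  · exact Or.inl ⟨hτ.1, hc⟩
  · exact Or.inr ⟨hc, hτ.2⟩

-- kernel mass identity
lemma kernVal (a b : ℝ) (hab : a + b = 1) (t : ℝ) (ht : 0 < t) :
    (∫ τ in Ioo (0:ℝ) t, (t - τ) ^ (-a) * τ ^ (-b)) =
      ∫ s in Ioo (0:ℝ) 1, (1 - s) ^ (-a) * s ^ (-b) := by
  have key := intervalIntegral.integral_comp_mul_left
    (f := fun τ : ℝ => (t - τ) ^ (-a) * τ ^ (-b)) (a := 0) (b := 1) ht.ne'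
  have hcong : (∫ s in (0:ℝ)..1, (t - t * s) ^ (-a) * (t * s) ^ (-b)) =
      ∫ s in (0:ℝ)..1, t⁻¹ * ((1 - s) ^ (-a) * s ^ (-b)) := by
    apply intervalIntegral.integral_congr
    intro s hs
    rw [uIcc_of_le (by norm_num)] at hs
    have hs0 : 0 ≤ s := hs.1
    have hs1 : 0 ≤ 1 - s := by linarith [hs.2]
    have e1 : t - t * s = t * (1 - s) := by ring
    have e2 : t ^ (-a) * t ^ (-b) = t⁻¹ := by
      rw [← Real.rpow_add ht, show -a + -b = -1 by linarith, Real.rpow_neg_one]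
    show (t - t * s) ^ (-a) * (t * s) ^ (-b) = t⁻¹ * ((1 - s) ^ (-a) * s ^ (-b))
    rw [e1, Real.mul_rpow ht.le hs1, Real.mul_rpow ht.le hs0, ← e2]
    ring
  rw [← integral_Ioc_eq_integral_Ioo, ← integral_Ioc_eq_integral_Ioo,
    ← intervalIntegral.integral_of_le ht.le,
    ← intervalIntegral.integral_of_le (by norm_num : (0:ℝ) ≤ 1)]
  have : (∫ s in (0:ℝ)..1, (t - t * s) ^ (-a) * (t * s) ^ (-b)) =
      t⁻¹ • ∫ τ in (0:ℝ)..t, (t - τ) ^ (-a) * τ ^ (-b) := by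
    simpa using key
  rw [hcong, intervalIntegral.integral_const_mul] at this
  have htne : t⁻¹ ≠ 0 := inv_ne_zero ht.ne'
  field_simp at this
  rw [smul_eq_mul, ← mul_assoc, mul_one_div_cancel ht.ne', one_mul] at this
  linarith [this]

theorem gronwall_singular_critical
    (a b C₁ C₂ : ℝ) (ha : 0 < a) (ha1 : a < 1) (hb : 0 < b) (hab : a + b = 1)
    (hC₁ : 0 < C₁) (hC₂ : 0 < C₂)
    (K : ℝ) (hK : K = ∫ s in Ioo (0:ℝ) 1, (1 - s) ^ (-a) * s ^ (-b))
    (hsmall : C₂ < 1 / K)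
    (h : ℝ → ℝ)
    (hmeas : Measurable h)
    (hnonneg : ∀ t, 0 ≤ t → 0 ≤ h t)
    (hloc : ∀ T : ℝ, 0 < T → ∃ M : ℝ, ∀ t ∈ Icc (0:ℝ) T, h t ≤ M)
    (hineq : ∀ t : ℝ, 0 ≤ t →
      h t ≤ C₁ * (1 + t) +
        C₂ * ∫ τ in Ioo (0:ℝ) t, (t - τ) ^ (-a) * τ ^ (-b) * h τ) :
    ∀ t : ℝ, 0 ≤ t → h t ≤ (C₁ / (1 - C₂ * K)) * (1 + t) := by
  have hb1 : b < 1 := by linarith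
  have hKpos : 0 < K := by
    rcases lt_trichotomy K 0 with hc | hc | hc
    · have : 1 / K < 0 := div_neg_of_pos_of_neg one_pos hc
      linarith
    · rw [hc] at hsmall; simp at hsmall; linarith
    · exact hc
  have hCK : C₂ * K < 1 := (lt_div_iff₀ hKpos).mp hsmall
  have hden : 0 < 1 - C₂ * K := by linarith
  intro t₀ ht₀
  -- the sup of h t / (1+t) over [0, t₀]
  set S : ℝ := sSup ((fun t => h t / (1 + t)) '' Icc 0 t₀) with hSdef
  obtain ⟨M, hM⟩ := hloc (t₀ + 1) (by linarith)
  have hbdd : BddAbove ((fun t => h t / (1 + t)) '' Icc 0 t₀) := by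
    refine ⟨M, ?_⟩
    rintro _ ⟨t, ht, rfl⟩
    calc h t / (1 + t) ≤ h t := div_le_self (hnonneg t ht.1) (by linarith [ht.1])
      _ ≤ M := hM t ⟨ht.1, by linarith [ht.2]⟩
  have hmem0 : h 0 / (1 + 0) ∈ ((fun t => h t / (1 + t)) '' Icc 0 t₀) :=
    ⟨0, ⟨le_refl 0, ht₀⟩, rfl⟩
  have hS0 : 0 ≤ S := le_trans (by simpa using div_nonneg (hnonneg 0 le_rfl) one_pos.le)
    (le_csSup hbdd hmem0)
  have hSle : ∀ τ ∈ Icc (0:ℝ) t₀, h τ ≤ S * (1 + τ) := by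
    intro τ hτ
    have h1 : h τ / (1 + τ) ≤ S := le_csSup hbdd ⟨τ, hτ, rfl⟩
    have h2 : (0:ℝ) < 1 + τ := by linarith [hτ.1]
    calc h τ = (h τ / (1 + τ)) * (1 + τ) := by field_simp
      _ ≤ S * (1 + τ) := mul_le_mul_of_nonneg_right h1 h2.le
  have key : ∀ t ∈ Icc (0:ℝ) t₀, h t ≤ (C₁ + C₂ * K * S) * (1 + t) := by
    intro t ht
    rcases eq_or_lt_of_le ht.1 with hc | hc
    · have := hineq 0 le_rfl
      simp only [Ioo_self, Measure.restrict_empty, integral_zero_measure, mul_zero,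
        add_zero] at this
      rw [← hc]
      nlinarith [mul_nonneg (mul_nonneg hC₂.le hKpos.le) hS0]
    · have hker : IntegrableOn (fun τ : ℝ => (t - τ) ^ (-a) * τ ^ (-b)) (Ioo 0 t) :=
        kernInt a b ha ha1 hb hb1 t hc
      have hint1 : IntegrableOn (fun τ : ℝ => (t - τ) ^ (-a) * τ ^ (-b) * h τ) (Ioo 0 t) := by
        refine Integrable.mono' ((hker.mul_const (S * (1 + t)))) 
          (((kernMeas a b t).mul hmeas).aestronglyMeasurable) ?_
        filter_upwards [ae_restrict_mem measurableSet_Ioo] with τ hτ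
        have hτ0 : 0 < τ := hτ.1
        have hτt : 0 < t - τ := by linarith [hτ.2]
        have hknn : 0 ≤ (t - τ) ^ (-a) * τ ^ (-b) :=
          mul_nonneg (Real.rpow_nonneg hτt.le _) (Real.rpow_nonneg hτ0.le _)
        have hh : h τ ≤ S * (1 + t) := by
          calc h τ ≤ S * (1 + τ) := hSle τ ⟨hτ0.le, le_trans hτ.2.le ht.2⟩
            _ ≤ S * (1 + t) := mul_le_mul_of_nonneg_left (by linarith [hτ.2]) hS0
        rw [Real.norm_eq_abs, abs_of_nonneg (mul_nonneg hknn (hnonneg τ hτ0.le))]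
        exact mul_le_mul_of_nonneg_left hh hknn
      have hintle : (∫ τ in Ioo (0:ℝ) t, (t - τ) ^ (-a) * τ ^ (-b) * h τ) ≤
          ∫ τ in Ioo (0:ℝ) t, (t - τ) ^ (-a) * τ ^ (-b) * (S * (1 + t)) := by
        refine setIntegral_mono_on hint1 (hker.mul_const _) measurableSet_Ioo ?_
        intro τ hτ
        have hτ0 : 0 < τ := hτ.1
        have hτt : 0 < t - τ := by linarith [hτ.2]
        have hknn : 0 ≤ (t - τ) ^ (-a) * τ ^ (-b) :=
          mul_nonneg (Real.rpow_nonneg hτt.le _) (Real.rpow_nonneg hτ0.le _)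
        have hh : h τ ≤ S * (1 + t) := by
          calc h τ ≤ S * (1 + τ) := hSle τ ⟨hτ0.le, le_trans hτ.2.le ht.2⟩
            _ ≤ S * (1 + t) := mul_le_mul_of_nonneg_left (by linarith [hτ.2]) hS0
        exact mul_le_mul_of_nonneg_left hh hknn
      have hval : (∫ τ in Ioo (0:ℝ) t, (t - τ) ^ (-a) * τ ^ (-b) * (S * (1 + t))) =
          K * (S * (1 + t)) := by
        rw [integral_mul_const, kernVal a b hab t hc, ← hK]
      have := hineq t ht.1
      have h2 : h t ≤ C₁ * (1 + t) + C₂ * (K * (S * (1 + t))) := by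
        calc h t ≤ C₁ * (1 + t) +
            C₂ * ∫ τ in Ioo (0:ℝ) t, (t - τ) ^ (-a) * τ ^ (-b) * h τ := this
          _ ≤ C₁ * (1 + t) + C₂ * (K * (S * (1 + t))) := by
              rw [← hval]
              exact add_le_add (le_refl _) (mul_le_mul_of_nonneg_left hintle hC₂.le)
      nlinarith
  have hSbound : S ≤ C₁ + C₂ * K * S := by
    apply Real.sSup_le
    · rintro _ ⟨t, ht, rfl⟩
      have h2 : (0:ℝ) < 1 + t := by linarith [ht.1]
      rw [div_le_iff₀ h2]
      exact key t ht
    · nlinarith [mul_nonneg (mul_nonneg hC₂.le hKpos.le) hS0]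
  have hSfin : S ≤ C₁ / (1 - C₂ * K) := by
    rw [le_div_iff₀ hden]
    nlinarith
  calc h t₀ ≤ S * (1 + t₀) := hSle t₀ ⟨ht₀, le_refl t₀⟩
    _ ≤ (C₁ / (1 - C₂ * K)) * (1 + t₀) :=
        mul_le_mul_of_nonneg_right hSfin (by linarith)
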